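/- Let M be a module over the twisted Heisenberg-Virasoro algebra and v ∈ M with I_1·v = 0 and L_1·v = 0. Then I_k·(L_2·v) = 0 for all integers k ≥ 1. -/

import Mathlib

/-- A representation of the twisted Heisenberg–Virasoro algebra on a ℂ-vector
space `M`: operators `L n`, `I n`, `C`, `CI`, `CLI` satisfying the defining
commutation relations (brackets of endomorphisms are ring commutators). -/
structure HVRep (M : Type) [AddCommGroup M] [Module ℂ M] where
  L : ℤ → Module.End ℂ M
  I : ℤ → Module.End ℂ M
  C : Module.End ℂ M
  CI : Module.End ℂ M
  CLI : Module.End ℂ M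
  comm_LL : ∀ n m : ℤ, L n * L m - L m * L n =
    (m - n : ℂ) • L (n + m) +
      (if n = -m then (((n : ℂ) ^ 3 - (n : ℂ)) / 12) else 0) • C
  comm_LI : ∀ n m : ℤ, L n * I m - I m * L n =
    (m : ℂ) • I (n + m) +
      (if n = -m then ((n : ℂ) ^ 2 + (n : ℂ)) else 0) • CLI
  comm_II : ∀ n m : ℤ, I n * I m - I m * I n =
    (if n = -m then (n : ℂ) else 0) • CI
  central_C_L : ∀ n : ℤ, L n * C = C * L n
  central_C_I : ∀ n : ℤ, I n * C = C * I n
  central_CI_L : ∀ n : ℤ, L n * CI = CI * L n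
  central_CI_I : ∀ n : ℤ, I n * CI = CI * I n
  central_CLI_L : ∀ n : ℤ, L n * CLI = CLI * L n
  central_CLI_I : ∀ n : ℤ, I n * CLI = CLI * I n
  central_C_CI : C * CI = CI * C
  central_C_CLI : C * CLI = CLI * C
  central_CI_CLI : CI * CLI = CLI * CI

/-- If I₁·v = 0 and L₁·v = 0 then Iₖ·(L₂·v) = 0 for all k ≥ 1. -/
theorem hv_Ik_L2v_eq_zero {M : Type} [AddCommGroup M] [Module ℂ M]
    (ρ : HVRep M) (v : M) (h1 : ρ.I 1 v = 0) (h2 : ρ.L 1 v = 0) :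
    ∀ k : ℤ, 1 ≤ k → ρ.I k (ρ.L 2 v) = 0 := by
  have hIv : ∀ k : ℤ, 1 ≤ k → ρ.I k v = 0 := by
    refine fun k => Int.le_induction (motive := fun k _ => ρ.I k v = 0) (m := 1) h1 ?_ k
    intro k hk ih
    have hne : ¬ (1 : ℤ) = -k := by omega
    have hc := ρ.comm_LI 1 k
    rw [if_neg hne] at hc
    have hv := congrArg (fun f : Module.End ℂ M => f v) hc
    simp only [LinearMap.sub_apply, LinearMap.add_apply, LinearMap.smul_apply,
      Module.End.mul_apply, zero_smul, add_zero, ih, h2, map_zero, sub_zero] at hv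
    have hk0 : (k : ℂ) ≠ 0 := by exact_mod_cast (by omega : k ≠ 0)
    have h0 : ρ.I (1 + k) v = 0 := by
      rcases smul_eq_zero.mp hv.symm with h | h
      · exact absurd h hk0
      · exact h
    rwa [add_comm] at h0
  intro k hk
  have hne : ¬ (2 : ℤ) = -k := by omega
  have hc := ρ.comm_LI 2 k
  rw [if_neg hne] at hc
  have hv := congrArg (fun f : Module.End ℂ M => f v) hc
  simp only [LinearMap.sub_apply, LinearMap.add_apply, LinearMap.smul_apply,
    Module.End.mul_apply, zero_smul, add_zero, hIv k hk, hIv (2 + k) (by omega),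
    map_zero, smul_zero, zero_sub] at hv
  exact neg_eq_zero.mp hv
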